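/- Consider the satellite repeater-chain MDP with state space S = {0,1} × {0,1} × M × M × {1,...,Δmax} (M = {−1} ∪ {1,...,m*}, m* ≥ 1, Δmax ≥ 1, 2·m* ≤ Δmax) and transition kernel defined as follows. Visibilities evolve by independent two-state Markov chains with stochastic matrices P12 and P23; generation may be requested on a link only when it is visible, in which case the link is dropped and regenerated with age 1 with probability p_L and set to −1 otherwise; a swap may be attempted only when both elementary links are active and no generation is requested, it consumes both links (setting their ages to −1), and with probability p_sw it resets the AoE to m12 + m23 while with probability 1 − p_sw the AoE updates to min(Δ+1, Δmax); links not acted upon age by the operator g (g(m) = m+1 if 1 ≤ m ≤ m* and m+1 ≤ m*, g(m) = −1 if 1 ≤ m ≤ m* and m+1 > m*, g(−1) = −1); in any slot with no successful swap the AoE updates to min(Δ+1, Δmax). Assume P12(i,0) > 0 and P23(i,0) > 0 for all i ∈ {0,1}, and p_sw < 1. Then for every stationary deterministic policy π : S → A choosing admissible actions and every initial state s ∈ S, the N-step state distribution under π, with N = m* + (Δmax − 1), assigns strictly positive probability to the state s* = (0, 0, −1, −1, Δmax). Consequently the Markov chain induced by any stationary deterministic policy is unichain. -/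

import Mathlib

open scoped ENNReal

/-- A state of the satellite repeater-chain MDP:
`(v12, v23, m12, m23, Δ)` — the two visibility states, the two elementary link ages,
and the Age of Entanglement of the end-to-end link. -/
abbrev QState : Type := Fin 2 × Fin 2 × ℤ × ℤ × ℤ

/-- An action `(a12, a23, a_sw)`: request generation on link (1,2), on link (2,3),
attempt a swap. -/
abbrev QAction : Type := Bool × Bool × Bool

/-- The elementary-link aging operator with memory cutoff `m*`:
`g m = m + 1` if `1 ≤ m ≤ m*` and `m + 1 ≤ m*`; `g m = -1` if `1 ≤ m ≤ m*` and
`m + 1 > m*`; and `g (-1) = -1`. -/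
def age (mstar : ℕ) (m : ℤ) : ℤ :=
  if 1 ≤ m ∧ m + 1 ≤ (mstar : ℤ) then m + 1 else -1

/-- Drop-then-attempt regeneration of an elementary link: with probability `p_L` the new
link exists with age `1`; otherwise its age is `-1`. -/
noncomputable def genPMF (pL : ℝ≥0∞) (hpL : pL ≤ 1) : PMF ℤ :=
  (PMF.ofFintype (fun b => cond b pL (1 - pL)) (by simp [hpL])).map fun b => if b then 1 else -1

/-- Valid states: `m12, m23 ∈ M = {-1} ∪ {1,…,m*}` and `Δ ∈ {1,…,Δmax}`. -/
def validState (mstar Δmax : ℕ) (s : QState) : Prop :=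
  (s.2.2.1 = -1 ∨ (1 ≤ s.2.2.1 ∧ s.2.2.1 ≤ (mstar : ℤ))) ∧
  (s.2.2.2.1 = -1 ∨ (1 ≤ s.2.2.2.1 ∧ s.2.2.2.1 ≤ (mstar : ℤ))) ∧
  (1 ≤ s.2.2.2.2 ∧ s.2.2.2.2 ≤ (Δmax : ℤ))

/-- Admissibility of action `a` in state `s`: a swap requires both links active and no
generation request; a generation request on a link requires that link to be visible. -/
def admissible (s : QState) (a : QAction) : Prop :=
  (a.2.2 = true → a.1 = false ∧ a.2.1 = false ∧ 1 ≤ s.2.2.1 ∧ 1 ≤ s.2.2.2.1) ∧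
  (a.1 = true → s.1 = 1) ∧
  (a.2.1 = true → s.2.1 = 1)

/-- One-step transition kernel of the satellite repeater-chain MDP.
Visibilities evolve exogenously by the kernels `κ₁, κ₂` (the rows of the stochastic
matrices `P12, P23`). If a swap is attempted, both parent links are consumed; with
probability `p_sw` the AoE resets to `m12 + m23`, otherwise it updates to
`min (Δ+1) Δmax`. If no swap is attempted, each link either regenerates (if requested)
with success probability `p_L` under the drop-then-attempt rule, or ages by the operator
`g`, and the AoE updates to `min (Δ+1) Δmax`. -/
noncomputable def stepKernel (mstar Δmax : ℕ) (κ₁ κ₂ : Fin 2 → PMF (Fin 2))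
    (pL psw : ℝ≥0∞) (hpL : pL ≤ 1) (hpsw : psw ≤ 1) (s : QState) (a : QAction) :
    PMF QState :=
  (κ₁ s.1).bind fun v12' =>
  (κ₂ s.2.1).bind fun v23' =>
    if a.2.2 then
      (PMF.ofFintype (fun b => cond b psw (1 - psw)) (by simp [hpsw])).map fun succ =>
        (v12', v23', -1, -1,
          if succ then s.2.2.1 + s.2.2.2.1 else min (s.2.2.2.2 + 1) (Δmax : ℤ))
    else
      (if a.1 then genPMF pL hpL else PMF.pure (age mstar s.2.2.1)).bind fun m12' =>
      (if a.2.1 then genPMF pL hpL else PMF.pure (age mstar s.2.2.2.1)).map fun m23' =>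
        (v12', v23', m12', m23', min (s.2.2.2.2 + 1) (Δmax : ℤ))

/-- The `n`-step state distribution under a stationary deterministic policy `π`,
obtained by `n`-fold sequential composition (bind) of the one-step kernel with actions
chosen by `π`. -/
noncomputable def nstepDist (K : QState → QAction → PMF QState) (π : QState → QAction) :
    ℕ → QState → PMF QState
  | 0, s => PMF.pure s
  | n + 1, s => (K s (π s)).bind (nstepDist K π n)

-- auxiliary lemmas

lemma gen_exists (mstar : ℕ) (hmstar : 1 ≤ mstar) (pL : ℝ≥0∞) (hpL : pL ≤ 1) :
    ∃ m' ∈ (genPMF pL hpL).support, m' = -1 ∨ (1 ≤ m' ∧ m' ≤ (mstar : ℤ)) := by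
  obtain ⟨b, hb⟩ := (PMF.ofFintype (fun b => cond b pL (1 - pL)) (by simp [hpL])).support_nonempty
  refine ⟨if b then 1 else -1, (PMF.mem_support_map_iff _ _ _).2 ⟨b, hb, rfl⟩, ?_⟩
  cases b
  · left; rfl
  · right; constructor <;> simp <;> omega

lemma age_mem (mstar : ℕ) (m : ℤ) : age mstar m = -1 ∨ (1 ≤ age mstar m ∧ age mstar m ≤ (mstar : ℤ)) := by
  unfold age; split <;> omega

lemma descend (mstar Δmax : ℕ) (hmstar : 1 ≤ mstar)
    (κ₁ κ₂ : Fin 2 → PMF (Fin 2))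
    (hκ₁ : ∀ i : Fin 2, 0 < κ₁ i 0) (hκ₂ : ∀ i : Fin 2, 0 < κ₂ i 0)
    (pL psw : ℝ≥0∞) (hpL : pL ≤ 1) (hpsw : psw < 1)
    (π : QState → QAction)
    (hπ : ∀ s : QState, validState mstar Δmax s → admissible s (π s)) :
    ∀ r : ℕ, ∀ s : QState,
      s.1 = 0 → s.2.1 = 0 →
      (s.2.2.1 = -1 ∨ (1 ≤ s.2.2.1 ∧ s.2.2.1 ≤ (mstar : ℤ) ∧ (mstar : ℤ) + 1 - s.2.2.1 ≤ (r : ℤ))) →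
      (s.2.2.2.1 = -1 ∨ (1 ≤ s.2.2.2.1 ∧ s.2.2.2.1 ≤ (mstar : ℤ) ∧ (mstar : ℤ) + 1 - s.2.2.2.1 ≤ (r : ℤ))) →
      (1 ≤ s.2.2.2.2 ∧ s.2.2.2.2 ≤ (Δmax : ℤ) ∧ (Δmax : ℤ) ≤ s.2.2.2.2 + (r : ℤ)) →
      ((0, 0, -1, -1, (Δmax : ℤ)) : QState) ∈
        (nstepDist (stepKernel mstar Δmax κ₁ κ₂ pL psw hpL hpsw.le) π r s).support := by
  intro r
  induction r with
  | zero =>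
    intro s h1 h2 h3 h4 h5
    obtain ⟨v1, v2, m1, m2, d⟩ := s
    simp only at h1 h2 h3 h4 h5
    subst h1; subst h2
    have hm1 : m1 = -1 := by omega
    have hm2 : m2 = -1 := by omega
    have hd : d = (Δmax : ℤ) := by omega
    subst hm1; subst hm2; subst hd
    simp [nstepDist]
  | succ r ih =>
    intro s h1 h2 h3 h4 h5
    have hvalid : validState mstar Δmax s := by
      refine ⟨?_, ?_, h5.1, h5.2.1⟩ <;> [rcases h3 with h | h; rcases h4 with h | h] <;>
        first | (left; exact h) | (right; exact ⟨h.1, h.2.1⟩)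
    have ha := hπ s hvalid
    have ha1 : (π s).1 = false := by
      cases h : (π s).1
      · rfl
      · have := ha.2.1 h; rw [h1] at this; exact absurd this (by decide)
    have ha2 : (π s).2.1 = false := by
      cases h : (π s).2.1
      · rfl
      · have := ha.2.2 h; rw [h2] at this; exact absurd this (by decide)
    show _ ∈ ((stepKernel mstar Δmax κ₁ κ₂ pL psw hpL hpsw.le s (π s)).bind
      (nstepDist (stepKernel mstar Δmax κ₁ κ₂ pL psw hpL hpsw.le) π r)).support
    rw [PMF.mem_support_bind_iff]
    cases hsw : (π s).2.2
    · -- no swap: deterministic aging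
      refine ⟨(0, 0, age mstar s.2.2.1, age mstar s.2.2.2.1, min (s.2.2.2.2 + 1) (Δmax : ℤ)), ?_, ?_⟩
      · simp only [stepKernel, hsw, ha1, ha2, if_false, Bool.false_eq_true]
        rw [PMF.mem_support_bind_iff]
        refine ⟨0, (PMF.mem_support_iff _ _).2 (hκ₁ s.1).ne', ?_⟩
        rw [PMF.mem_support_bind_iff]
        refine ⟨0, (PMF.mem_support_iff _ _).2 (hκ₂ s.2.1).ne', ?_⟩
        rw [PMF.mem_support_bind_iff]
        refine ⟨age mstar s.2.2.1, by simp, ?_⟩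
        rw [PMF.mem_support_map_iff]
        exact ⟨age mstar s.2.2.2.1, by simp, rfl⟩
      · refine ih _ rfl rfl ?_ ?_ ?_
        · have := age_mem mstar s.2.2.1
          simp only [age] at this ⊢
          split <;> omega
        · have := age_mem mstar s.2.2.2.1
          simp only [age] at this ⊢
          split <;> omega
        · simp only; omega
    · -- swap attempted: take the failure branch
      refine ⟨(0, 0, -1, -1, min (s.2.2.2.2 + 1) (Δmax : ℤ)), ?_, ?_⟩
      · simp only [stepKernel, hsw, if_true]
        rw [PMF.mem_support_bind_iff]
        refine ⟨0, (PMF.mem_support_iff _ _).2 (hκ₁ s.1).ne', ?_⟩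
        rw [PMF.mem_support_bind_iff]
        refine ⟨0, (PMF.mem_support_iff _ _).2 (hκ₂ s.2.1).ne', ?_⟩
        rw [PMF.mem_support_map_iff]
        refine ⟨false, ?_, by simp⟩
        rw [PMF.mem_support_ofFintype_iff]
        exact (tsub_pos_of_lt hpsw).ne'
      · refine ih _ rfl rfl (Or.inl rfl) (Or.inl rfl) ?_
        simp only; omega


/-- In the satellite repeater-chain MDP with `m* ≥ 1`, `Δmax ≥ 1`,
`2·m* ≤ Δmax`, visibility kernels with `P12(i,0) > 0` and `P23(i,0) > 0` for all `i`,
and swap success probability `p_sw < 1`, for every stationary deterministic policy `π`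
choosing admissible actions and every (valid) initial state `s`, the `N`-step state
distribution under `π`, with `N = m* + (Δmax − 1)`, assigns strictly positive
probability to the state `s* = (0, 0, −1, −1, Δmax)`.  (Consequently the Markov chain
induced by any stationary deterministic policy is unichain.) -/
theorem reachable_invisible_empty_maxAoE (mstar Δmax : ℕ)
    (hmstar : 1 ≤ mstar) (hΔmax : 1 ≤ Δmax) (hcut : 2 * mstar ≤ Δmax)
    (κ₁ κ₂ : Fin 2 → PMF (Fin 2))
    (hκ₁ : ∀ i : Fin 2, 0 < κ₁ i 0) (hκ₂ : ∀ i : Fin 2, 0 < κ₂ i 0)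
    (pL psw : ℝ≥0∞) (hpL : pL ≤ 1) (hpsw : psw < 1)
    (π : QState → QAction)
    (hπ : ∀ s : QState, validState mstar Δmax s → admissible s (π s)) :
    ∀ s : QState, validState mstar Δmax s →
      0 < nstepDist (stepKernel mstar Δmax κ₁ κ₂ pL psw hpL hpsw.le) π
            (mstar + (Δmax - 1)) s (0, 0, -1, -1, (Δmax : ℤ)) := by

  intro s hs
  have hΔ2 : 2 ≤ Δmax := by omega
  obtain ⟨h3, h4, h5⟩ := hs
  have ha := hπ s ⟨h3, h4, h5⟩
  have hN : mstar + (Δmax - 1) = (mstar + Δmax - 2) + 1 := by omega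
  set r0 : ℕ := mstar + Δmax - 2 with hr0
  have hr0' : (mstar : ℤ) ≤ (r0 : ℤ) ∧ (Δmax : ℤ) ≤ 1 + (r0 : ℤ) := by
    constructor <;> omega
  rw [hN, PMF.apply_pos_iff]
  show _ ∈ ((stepKernel mstar Δmax κ₁ κ₂ pL psw hpL hpsw.le s (π s)).bind
    (nstepDist (stepKernel mstar Δmax κ₁ κ₂ pL psw hpL hpsw.le) π r0)).support
  rw [PMF.mem_support_bind_iff]
  cases hsw : (π s).2.2
  · -- no swap in the first step
    obtain ⟨m12', hm12, hp12⟩ :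
        ∃ m' ∈ (if (π s).1 then genPMF pL hpL else PMF.pure (age mstar s.2.2.1)).support,
          m' = -1 ∨ (1 ≤ m' ∧ m' ≤ (mstar : ℤ)) := by
      cases h : (π s).1
      · simp only [Bool.false_eq_true, if_false]
        exact ⟨age mstar s.2.2.1, by simp, age_mem mstar s.2.2.1⟩
      · simp only [if_true]
        exact gen_exists mstar hmstar pL hpL
    obtain ⟨m23', hm23, hp23⟩ :
        ∃ m' ∈ (if (π s).2.1 then genPMF pL hpL else PMF.pure (age mstar s.2.2.2.1)).support,
          m' = -1 ∨ (1 ≤ m' ∧ m' ≤ (mstar : ℤ)) := by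
      cases h : (π s).2.1
      · simp only [Bool.false_eq_true, if_false]
        exact ⟨age mstar s.2.2.2.1, by simp, age_mem mstar s.2.2.2.1⟩
      · simp only [if_true]
        exact gen_exists mstar hmstar pL hpL
    refine ⟨(0, 0, m12', m23', min (s.2.2.2.2 + 1) (Δmax : ℤ)), ?_, ?_⟩
    · simp only [stepKernel, hsw, Bool.false_eq_true, if_false]
      rw [PMF.mem_support_bind_iff]
      refine ⟨0, (PMF.mem_support_iff _ _).2 (hκ₁ s.1).ne', ?_⟩
      rw [PMF.mem_support_bind_iff]
      refine ⟨0, (PMF.mem_support_iff _ _).2 (hκ₂ s.2.1).ne', ?_⟩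
      rw [PMF.mem_support_bind_iff]
      refine ⟨m12', hm12, ?_⟩
      rw [PMF.mem_support_map_iff]
      exact ⟨m23', hm23, rfl⟩
    · refine descend mstar Δmax hmstar κ₁ κ₂ hκ₁ hκ₂ pL psw hpL hpsw π hπ r0 _ rfl rfl ?_ ?_ ?_
      · simp only; omega
      · simp only; omega
      · simp only; omega
  · -- swap attempted in the first step: take the failure branch
    refine ⟨(0, 0, -1, -1, min (s.2.2.2.2 + 1) (Δmax : ℤ)), ?_, ?_⟩
    · simp only [stepKernel, hsw, if_true]
      rw [PMF.mem_support_bind_iff]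
      refine ⟨0, (PMF.mem_support_iff _ _).2 (hκ₁ s.1).ne', ?_⟩
      rw [PMF.mem_support_bind_iff]
      refine ⟨0, (PMF.mem_support_iff _ _).2 (hκ₂ s.2.1).ne', ?_⟩
      rw [PMF.mem_support_map_iff]
      refine ⟨false, ?_, by simp⟩
      rw [PMF.mem_support_ofFintype_iff]
      exact (tsub_pos_of_lt hpsw).ne'
    · refine descend mstar Δmax hmstar κ₁ κ₂ hκ₁ hκ₂ pL psw hpL hpsw π hπ r0 _ rfl rfl
        (Or.inl rfl) (Or.inl rfl) ?_
      simp only; omega
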